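/- There exists n₀ ∈ ℕ such that for every n ≥ n₀ there is a convex body K in ℝⁿ and a finite family 𝓕 of translates of K such that ν(𝓕) = 1 (i.e., any two members of 𝓕 intersect) and every transversal of 𝓕 has cardinality at least (1/2)·(1.058)ⁿ; in particular τ(𝓕) ≥ (1/2)·(1.058)ⁿ·ν(𝓕). -/

import Mathlib

open Pointwise MeasureTheory

/-- `10^w ≤ C(n, w)` when `10 * w ≤ n`. -/
lemma aux_ten_pow_le_choose : ∀ w n : ℕ, 10 * w ≤ n → 10 ^ w ≤ n.choose w := by
  intro w
  induction w with
  | zero => intro n _; simp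
  | succ w ih =>
    intro n hn
    obtain ⟨m, rfl⟩ : ∃ m, n = m + 1 := ⟨n - 1, by omega⟩
    have h1 : 10 ^ w ≤ m.choose w := ih m (by omega)
    have h2 : (m + 1) * m.choose w = (m + 1).choose (w + 1) * (w + 1) :=
      Nat.add_one_mul_choose_eq m w
    have h3 : 10 ^ (w + 1) * (w + 1) ≤ (m + 1).choose (w + 1) * (w + 1) := by
      calc 10 ^ (w + 1) * (w + 1) = (10 * (w + 1)) * 10 ^ w := by ring
        _ ≤ (m + 1) * m.choose w := Nat.mul_le_mul (by omega) h1
        _ = (m + 1).choose (w + 1) * (w + 1) := h2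
    exact Nat.le_of_mul_le_mul_right h3 (by omega)

/-- The indicator vector of a finite set of coordinates. -/
noncomputable def auxVec (n : ℕ) (S : Finset (Fin n)) : EuclideanSpace ℝ (Fin n) :=
  (WithLp.equiv 2 (Fin n → ℝ)).symm (fun i => if i ∈ S then 1 else 0)

lemma auxVec_apply (n : ℕ) (S : Finset (Fin n)) (i : Fin n) :
    auxVec n S i = if i ∈ S then 1 else 0 := rfl

lemma auxVec_sum (n : ℕ) (S : Finset (Fin n)) : ∑ i, auxVec n S i = S.card := by
  simp only [auxVec_apply]
  rw [Finset.sum_ite_mem, Finset.univ_inter, Finset.sum_const, nsmul_eq_mul, mul_one]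

/-- coordinate distance is at most the euclidean distance -/
lemma aux_coord_le_dist (n : ℕ) (x y : EuclideanSpace ℝ (Fin n)) (i : Fin n) :
    |x i - y i| ≤ dist x y := by
  rw [EuclideanSpace.dist_eq]
  have h1 : dist (x i) (y i) ^ 2 ≤ ∑ j, dist (x j) (y j) ^ 2 :=
    Finset.single_le_sum (f := fun j => dist (x j) (y j) ^ 2)
      (fun j _ => sq_nonneg _) (Finset.mem_univ i)
  calc |x i - y i| = Real.sqrt (dist (x i) (y i) ^ 2) := by
        rw [Real.sqrt_sq dist_nonneg, Real.dist_eq]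
    _ ≤ Real.sqrt (∑ j, dist (x j) (y j) ^ 2) := Real.sqrt_le_sqrt h1

/-- For all sufficiently large `n` there is a convex body `K` in `ℝⁿ` and a
finite family of translates of `K`, any two of which intersect (so `ν = 1`), such that every
transversal has cardinality at least `(1/2) · 1.058ⁿ`. -/
theorem exists_translates_large_transversal_number :
    ∃ n₀ : ℕ, ∀ n : ℕ, n₀ ≤ n →
      ∃ K : Set (EuclideanSpace ℝ (Fin n)),
        IsCompact K ∧ Convex ℝ K ∧ (interior K).Nonempty ∧
        ∃ V : Finset (EuclideanSpace ℝ (Fin n)),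
          V.Nonempty ∧
          (∀ v₁ ∈ V, ∀ v₂ ∈ V, ((K + {v₁}) ∩ (K + {v₂})).Nonempty) ∧
          (∀ T : Finset (EuclideanSpace ℝ (Fin n)),
            (∀ v ∈ V, ∃ x ∈ T, x ∈ K + {v}) →
            (1 / 2 : ℝ) * (1.058 : ℝ) ^ n ≤ T.card) := by
  classical
  refine ⟨10, fun n hn => ?_⟩
  set w : ℕ := n / 10 with hw
  have hw1 : 1 ≤ w := Nat.le_div_iff_mul_le (by norm_num) |>.2 (by omega)
  have hw10 : 10 * w ≤ n := Nat.mul_div_le n 10 |>.trans_eq' (by ring)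
  have hwn : n ≤ 10 * w + 9 := by
    have h1 := Nat.div_add_mod n 10
    have h2 : n % 10 < 10 := Nat.mod_lt n (by norm_num)
    omega
  have hwle : w ≤ n := by omega
  set K : Set (EuclideanSpace ℝ (Fin n)) :=
    {x | (∀ i, 0 ≤ x i) ∧ ∑ i, x i ≤ (w : ℝ)} with hK
  -- membership in a translate
  have memKv : ∀ (v x : EuclideanSpace ℝ (Fin n)), x ∈ K + ({v} : Set _) ↔
      ((∀ i, 0 ≤ x i - v i) ∧ ∑ i, (x i - v i) ≤ (w : ℝ)) := by
    intro v x
    rw [Set.add_singleton]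
    constructor
    · rintro ⟨k, hk, rfl⟩
      simp only [hK, Set.mem_setOf_eq] at hk
      constructor
      · intro i; simpa [PiLp.add_apply] using hk.1 i
      · calc ∑ i, ((k + v) i - v i) = ∑ i, k i := by
              apply Finset.sum_congr rfl; intro i _; simp [PiLp.add_apply]
          _ ≤ (w : ℝ) := hk.2
    · rintro ⟨h1, h2⟩
      refine ⟨x - v, ⟨fun i => by simpa [PiLp.sub_apply] using h1 i, ?_⟩, sub_add_cancel x v⟩
      calc ∑ i, (x - v) i = ∑ i, (x i - v i) := by
            apply Finset.sum_congr rfl; intro i _; simp [PiLp.sub_apply]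
        _ ≤ (w : ℝ) := h2
  have hnpos : (0:ℝ) < n := by exact_mod_cast (show 0 < n by omega)
  refine ⟨K, ?_, ?_, ?_, ?_⟩
  · -- compact
    apply Metric.isCompact_of_isClosed_isBounded
    · have hrw : K = (⋂ i, {x : EuclideanSpace ℝ (Fin n) | 0 ≤ x i}) ∩
          {x : EuclideanSpace ℝ (Fin n) | ∑ i, x i ≤ (w : ℝ)} := by
        ext x; simp [hK, Set.mem_iInter, Set.mem_setOf_eq]
      rw [hrw]
      exact IsClosed.inter
        (isClosed_iInter fun i =>
          isClosed_le continuous_const (EuclideanSpace.proj (𝕜 := ℝ) i).continuous)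
        (isClosed_le (continuous_finset_sum _ fun i _ =>
          (EuclideanSpace.proj (𝕜 := ℝ) i).continuous) continuous_const)
    · apply Metric.isBounded_closedBall (x := (0 : EuclideanSpace ℝ (Fin n))) (r := (w:ℝ)) |>.subset
      intro x hx
      rw [Metric.mem_closedBall, dist_zero_right, EuclideanSpace.norm_eq]
      have hsumnn : (0:ℝ) ≤ ∑ i, x i := Finset.sum_nonneg fun i _ => hx.1 i
      calc Real.sqrt (∑ i, ‖x i‖ ^ 2) = Real.sqrt (∑ i, (x i) ^ 2) := by
            congr 1; apply Finset.sum_congr rfl; intro i _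
            rw [Real.norm_eq_abs, sq_abs]
        _ ≤ Real.sqrt ((∑ i, x i) ^ 2) :=
            Real.sqrt_le_sqrt (Finset.sum_sq_le_sq_sum_of_nonneg fun i _ => hx.1 i)
        _ = ∑ i, x i := Real.sqrt_sq hsumnn
        _ ≤ (w : ℝ) := hx.2
  · -- convex
    intro x hx y hy a b ha hb hab
    have happ : ∀ i, (a • x + b • y) i = a * x i + b * y i := by
      intro i; simp [PiLp.add_apply, PiLp.smul_apply, smul_eq_mul]
    refine ⟨fun i => ?_, ?_⟩
    · rw [happ i]
      exact add_nonneg (mul_nonneg ha (hx.1 i)) (mul_nonneg hb (hy.1 i))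
    · calc ∑ i, (a • x + b • y) i = ∑ i, (a * x i + b * y i) :=
            Finset.sum_congr rfl fun i _ => happ i
        _ = a * ∑ i, x i + b * ∑ i, y i := by
            rw [Finset.sum_add_distrib, Finset.mul_sum, Finset.mul_sum]
        _ ≤ a * w + b * w :=
            add_le_add (mul_le_mul_of_nonneg_left hx.2 ha) (mul_le_mul_of_nonneg_left hy.2 hb)
        _ = (w : ℝ) := by rw [← add_mul, hab, one_mul]
  · -- interior nonempty
    set ε : ℝ := (w : ℝ) / (2 * n) with hε
    have hεpos : 0 < ε := by
      apply div_pos (by exact_mod_cast hw1) (by positivity)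
    set c : EuclideanSpace ℝ (Fin n) :=
      (WithLp.equiv 2 (Fin n → ℝ)).symm (fun _ => ε) with hc
    have hcapp : ∀ i, c i = ε := fun i => rfl
    refine ⟨c, ?_⟩
    rw [mem_interior]
    refine ⟨Metric.ball c ε, ?_, Metric.isOpen_ball, Metric.mem_ball_self hεpos⟩
    intro y hy
    rw [Metric.mem_ball] at hy
    have hcoord : ∀ i, |y i - c i| < ε := fun i =>
      lt_of_le_of_lt (aux_coord_le_dist n y c i) hy
    have hylb : ∀ i, 0 ≤ y i := by
      intro i
      have := abs_lt.1 (hcoord i)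
      have := this.1
      rw [hcapp i] at this
      linarith
    refine ⟨hylb, ?_⟩
    have hne : (Finset.univ : Finset (Fin n)).Nonempty := by
      have : Nonempty (Fin n) := ⟨⟨0, by omega⟩⟩
      exact Finset.univ_nonempty
    have hsum : ∑ i, y i < ∑ _i : Fin n, (2 * ε) := by
      apply Finset.sum_lt_sum_of_nonempty hne
      intro i _
      have := abs_lt.1 (hcoord i)
      have := this.2
      rw [hcapp i] at this
      linarith
    have : ∑ _i : Fin n, (2 * ε) = (w : ℝ) := by
      rw [Finset.sum_const, Finset.card_univ, Fintype.card_fin, nsmul_eq_mul, hε]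
      field_simp
    linarith
  · -- family
    set P : Finset (Finset (Fin n)) := Finset.powersetCard w Finset.univ with hP
    refine ⟨P.image (auxVec n), ?_, ?_, ?_⟩
    · apply Finset.Nonempty.image
      rw [hP, Finset.powersetCard_nonempty]
      simpa using hwle
    · -- pairwise intersecting
      rintro v₁ hv₁ v₂ hv₂
      obtain ⟨S, hS, rfl⟩ := Finset.mem_image.1 hv₁
      obtain ⟨S', hS', rfl⟩ := Finset.mem_image.1 hv₂
      rw [hP, Finset.mem_powersetCard] at hS hS'
      have key : ∀ A B : Finset (Fin n), A.card = w → B.card = w →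
          auxVec n (A ∪ B) ∈ K + ({auxVec n A} : Set _) := by
        intro A B hA hB
        rw [memKv]
        constructor
        · intro i
          simp only [auxVec_apply, Finset.mem_union]
          by_cases h : i ∈ A <;> by_cases h' : i ∈ B <;> simp [h, h']
        · have hsub : ∑ i, (auxVec n (A ∪ B) i - auxVec n A i)
              = ((A ∪ B).card : ℝ) - A.card := by
            rw [Finset.sum_sub_distrib, auxVec_sum, auxVec_sum]
          rw [hsub]
          have hle : (A ∪ B).card ≤ A.card + B.card := Finset.card_union_le A B
          have hle' : ((A ∪ B).card : ℝ) ≤ (A.card : ℝ) + B.card := by exact_mod_cast hle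
          rw [hB] at hle'
          linarith
      refine ⟨auxVec n (S ∪ S'), key S S' hS.2 hS'.2, ?_⟩
      rw [Finset.union_comm]
      exact key S' S hS'.2 hS.2
    · -- transversal bound
      intro T hT
      have fiber : ∀ x ∈ T,
          (P.filter (fun S => x ∈ K + ({auxVec n S} : Set _))).card ≤ 4 ^ w := by
        intro x _
        set F := P.filter (fun S => x ∈ K + ({auxVec n S} : Set _)) with hF
        rcases F.eq_empty_or_nonempty with h | ⟨S₀, hS₀⟩
        · rw [h, Finset.card_empty]; exact Nat.zero_le _
        · have hS₀' := Finset.mem_filter.1 hS₀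
          have hx0 := (memKv _ _).1 hS₀'.2
          have hxnn : ∀ i, 0 ≤ x i := by
            intro i
            have h1 := hx0.1 i
            have h2 : (0:ℝ) ≤ auxVec n S₀ i := by
              rw [auxVec_apply]; split <;> norm_num
            linarith
          have hScard : S₀.card = w := (Finset.mem_powersetCard.1 hS₀'.1).2
          have hsumx : ∑ i, x i ≤ 2 * w := by
            have h2 := hx0.2
            have h3 : ∑ i, (x i - auxVec n S₀ i) = ∑ i, x i - (S₀.card : ℝ) := by
              rw [Finset.sum_sub_distrib, auxVec_sum]
            rw [h3, hScard] at h2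
            linarith
          set Sx : Finset (Fin n) := Finset.univ.filter (fun i => (1:ℝ) ≤ x i) with hSx
          have hSxcard : Sx.card ≤ 2 * w := by
            have h1 : (Sx.card : ℝ) ≤ ∑ i ∈ Sx, x i := by
              calc (Sx.card : ℝ) = ∑ _i ∈ Sx, (1:ℝ) := by
                    rw [Finset.sum_const, nsmul_eq_mul, mul_one]
                _ ≤ ∑ i ∈ Sx, x i := Finset.sum_le_sum fun i hi =>
                    (Finset.mem_filter.1 hi).2
            have h2 : ∑ i ∈ Sx, x i ≤ ∑ i, x i :=
              Finset.sum_le_sum_of_subset_of_nonneg (Finset.subset_univ _)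
                (fun i _ _ => hxnn i)
            have : (Sx.card : ℝ) ≤ 2 * w := by linarith
            exact_mod_cast this
          have hFsub : F ⊆ Sx.powerset := by
            intro S hSmem
            rw [Finset.mem_powerset]
            intro i hi
            have hmem := (memKv _ _).1 (Finset.mem_filter.1 hSmem).2
            have h1 := hmem.1 i
            rw [auxVec_apply, if_pos hi] at h1
            rw [hSx, Finset.mem_filter]
            exact ⟨Finset.mem_univ i, by linarith⟩
          calc F.card ≤ Sx.powerset.card := Finset.card_le_card hFsub
            _ = 2 ^ Sx.card := Finset.card_powerset Sx
            _ ≤ 2 ^ (2 * w) := Nat.pow_le_pow_right (by norm_num) hSxcard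
            _ = 4 ^ w := by rw [pow_mul]; norm_num
      have hcov : P ⊆ T.biUnion
          (fun x => P.filter (fun S => x ∈ K + ({auxVec n S} : Set _))) := by
        intro S hS
        obtain ⟨x, hxT, hxK⟩ := hT (auxVec n S) (Finset.mem_image_of_mem _ hS)
        exact Finset.mem_biUnion.2 ⟨x, hxT, Finset.mem_filter.2 ⟨hS, hxK⟩⟩
      have hcount : n.choose w ≤ T.card * 4 ^ w := by
        calc n.choose w = P.card := by
              rw [hP, Finset.card_powersetCard, Finset.card_univ, Fintype.card_fin]
          _ ≤ (T.biUnion _).card := Finset.card_le_card hcov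
          _ ≤ ∑ x ∈ T, (P.filter (fun S => x ∈ K + ({auxVec n S} : Set _))).card :=
              Finset.card_biUnion_le
          _ ≤ ∑ _x ∈ T, 4 ^ w := Finset.sum_le_sum fiber
          _ = T.card * 4 ^ w := by rw [Finset.sum_const, smul_eq_mul]
      have h10 : 10 ^ w ≤ n.choose w := aux_ten_pow_le_choose w n hw10
      have hreal : ((10:ℝ)) ^ w ≤ (T.card : ℝ) * 4 ^ w := by
        exact_mod_cast le_trans h10 hcount
      have h4pos : (0:ℝ) < 4 ^ w := by positivity
      rw [← mul_le_mul_iff_of_pos_right h4pos]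
      refine le_trans ?_ hreal
      have hA : (1.058:ℝ) ^ n ≤ (2.5:ℝ) ^ w * 2 := by
        calc (1.058:ℝ) ^ n ≤ 1.058 ^ (10 * w + 9) :=
              pow_le_pow_right₀ (by norm_num) hwn
          _ = ((1.058:ℝ) ^ 10) ^ w * 1.058 ^ 9 := by rw [pow_add, pow_mul]
          _ ≤ 2.5 ^ w * 2 := by
              apply mul_le_mul (pow_le_pow_left₀ (by positivity) (by norm_num) w)
                (by norm_num) (by positivity) (by positivity)
      calc (1/2 : ℝ) * 1.058 ^ n * 4 ^ w ≤ (1/2) * ((2.5:ℝ) ^ w * 2) * 4 ^ w := by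
            have h4 : (0:ℝ) ≤ 4 ^ w := by positivity
            nlinarith
        _ = ((2.5:ℝ) * 4) ^ w := by rw [mul_pow]; ring
        _ = 10 ^ w := by norm_num
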